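/- Suppose Assumption 1 holds and B_f is irreducible. Then ρ(D_f^{-1}B_f) > ρ(D^{-1}B); that is, the basic reproduction number of the layered networked SIWS model strictly exceeds that of the networked SIS model (note that D^{-1}B is the top-left n×n principal submatrix of D_f^{-1}B_f). -/

import Mathlib

open Matrix

variable {n m : ℕ}

/-- The block matrix `B_f = [[B, B_w],[C_w, A_w − diag A_w]]`. -/
def BfM (B : Matrix (Fin n) (Fin n) ℝ) (Bw : Matrix (Fin n) (Fin m) ℝ)
    (Cw : Matrix (Fin m) (Fin n) ℝ) (Aw : Matrix (Fin m) (Fin m) ℝ) :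
    Matrix (Fin n ⊕ Fin m) (Fin n ⊕ Fin m) ℝ :=
  Matrix.fromBlocks B Bw Cw (Aw - Matrix.diagonal (fun j => Aw j j))

/-- The block diagonal matrix `D_f = blockdiag(D, D_w − diag A_w)`. -/
def DfM (δ : Fin n → ℝ) (δw : Fin m → ℝ) (Aw : Matrix (Fin m) (Fin m) ℝ) :
    Matrix (Fin n ⊕ Fin m) (Fin n ⊕ Fin m) ℝ :=
  Matrix.fromBlocks (Matrix.diagonal δ) 0 0 (Matrix.diagonal (fun j => δw j - Aw j j))

/-- `X(z) = diag(x_1,…,x_n,0,…,0)` for `z = (x,w)`. -/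
def XzM (z : Fin n ⊕ Fin m → ℝ) :
    Matrix (Fin n ⊕ Fin m) (Fin n ⊕ Fin m) ℝ :=
  Matrix.diagonal (Sum.elim (fun a => z (Sum.inl a)) (fun _ => (0:ℝ)))

/-- A (nonnegative) square matrix is irreducible if for every pair of indices `i, j`
there is `k ≥ 1` with `(M^k) i j > 0`. -/
def MatIrred {N : Type*} [Fintype N] [DecidableEq N] (M : Matrix N N ℝ) : Prop :=
  ∀ i j, ∃ k : ℕ, 1 ≤ k ∧ 0 < (M ^ k) i j

/-- The spectral radius of a real matrix: the supremum of the moduli of its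
complex eigenvalues. -/
noncomputable def specRad {N : Type*} [Fintype N] [DecidableEq N] (M : Matrix N N ℝ) : ENNReal :=
  spectralRadius ℂ (M.map (algebraMap ℝ ℂ))

attribute [local instance] Matrix.linftyOpNormedRing Matrix.linftyOpNormedAlgebra

section Aux

variable {I : Type*} [Fintype I] [DecidableEq I]

lemma entry_pow_nonneg {M : Matrix I I ℝ} (hM : ∀ i j, 0 ≤ M i j) (k : ℕ) :
    ∀ i j, 0 ≤ (M ^ k) i j := by
  induction k with
  | zero =>
      intro i j
      rw [pow_zero]
      by_cases h : i = j <;> simp [Matrix.one_apply, h]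
  | succ k ih =>
      intro i j
      rw [pow_succ, Matrix.mul_apply]
      exact Finset.sum_nonneg fun l _ => mul_nonneg (ih i l) (hM l j)

lemma entry_pow_mono {M N : Matrix I I ℝ} (hM : ∀ i j, 0 ≤ M i j)
    (h : ∀ i j, M i j ≤ N i j) (k : ℕ) : ∀ i j, (M ^ k) i j ≤ (N ^ k) i j := by
  induction k with
  | zero => intro i j; simp
  | succ k ih =>
      intro i j
      rw [pow_succ, pow_succ, Matrix.mul_apply, Matrix.mul_apply]
      refine Finset.sum_le_sum fun l _ => mul_le_mul (ih i l) (h l j) (hM l j) ?_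
      exact le_trans (entry_pow_nonneg hM k i l) (ih i l)

lemma matIrred_of_le {Q M : Matrix I I ℝ} (hQ : ∀ i j, 0 ≤ Q i j) {c : ℝ} (hc : 0 < c)
    (h : ∀ i j, c * Q i j ≤ M i j) (hirr : MatIrred Q) : MatIrred M := by
  intro i j
  obtain ⟨k, hk1, hk2⟩ := hirr i j
  have h1 : ∀ i j, 0 ≤ (c • Q) i j := fun i j => by
    simpa [smul_eq_mul] using mul_nonneg hc.le (hQ i j)
  have h2 := entry_pow_mono h1 (fun i j => by simpa [smul_eq_mul] using h i j) k i j
  have h3 : ((c • Q) ^ k) i j = c ^ k * (Q ^ k) i j := by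
    rw [smul_pow]; simp [smul_eq_mul]
  refine ⟨k, hk1, lt_of_lt_of_le ?_ h2⟩
  rw [h3]
  exact mul_pos (pow_pos hc k) hk2

lemma mulVec_entry_nonneg {M : Matrix I I ℝ} (hM : ∀ i j, 0 ≤ M i j) {v : I → ℝ}
    (hv : ∀ i, 0 ≤ v i) : ∀ i, 0 ≤ M.mulVec v i := by
  intro i
  simp only [Matrix.mulVec, dotProduct]
  exact Finset.sum_nonneg fun l _ => mul_nonneg (hM i l) (hv l)

lemma mulVec_entry_pos {P : Matrix I I ℝ} (hP : ∀ i j, 0 < P i j) {v : I → ℝ}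
    (hv : ∀ i, 0 ≤ v i) (hv0 : ∃ i, 0 < v i) : ∀ i, 0 < P.mulVec v i := by
  intro i
  obtain ⟨j0, hj0⟩ := hv0
  simp only [Matrix.mulVec, dotProduct]
  exact Finset.sum_pos' (fun l _ => mul_nonneg (hP i l).le (hv l))
    ⟨j0, Finset.mem_univ _, mul_pos (hP i j0) hj0⟩

lemma mulVec_entry_mono {M : Matrix I I ℝ} (hM : ∀ i j, 0 ≤ M i j) {v w : I → ℝ}
    (h : ∀ i, v i ≤ w i) : ∀ i, M.mulVec v i ≤ M.mulVec w i := by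
  intro i
  simp only [Matrix.mulVec, dotProduct]
  exact Finset.sum_le_sum fun l _ => mul_le_mul_of_nonneg_left (h l) (hM i l)

lemma add_one_entry_nonneg {M : Matrix I I ℝ} (hM : ∀ i j, 0 ≤ M i j) :
    ∀ i j, 0 ≤ (M + 1) i j := by
  intro i j
  have h1 : (0:ℝ) ≤ (1 : Matrix I I ℝ) i j := by
    by_cases h : i = j <;> simp [Matrix.one_apply, h]
  have h2 := hM i j
  rw [Matrix.add_apply]
  linarith

lemma one_le_pow_add_one_diag {M : Matrix I I ℝ} (hM : ∀ i j, 0 ≤ M i j) (t : ℕ) (i : I) :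
    1 ≤ ((M + 1) ^ t) i i := by
  induction t with
  | zero => simp
  | succ t ih =>
      rw [pow_succ, Matrix.mul_apply]
      have h1 : ((M + 1) ^ t) i i * (M + 1) i i ≤ ∑ l, ((M + 1) ^ t) i l * (M + 1) l i :=
        Finset.single_le_sum
          (f := fun l => ((M + 1) ^ t) i l * (M + 1) l i)
          (fun l _ => mul_nonneg (entry_pow_nonneg (add_one_entry_nonneg hM) t i l)
            (add_one_entry_nonneg hM l i)) (Finset.mem_univ i)
      have h2 : (1 : ℝ) ≤ (M + 1) i i := by
        simp [Matrix.add_apply, Matrix.one_apply_eq]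
        linarith [hM i i]
      calc (1 : ℝ) = 1 * 1 := by ring
        _ ≤ ((M + 1) ^ t) i i * (M + 1) i i :=
            mul_le_mul ih h2 zero_le_one (le_trans zero_le_one ih)
        _ ≤ _ := h1

lemma pow_add_one_entry_mono_exp {M : Matrix I I ℝ} (hM : ∀ i j, 0 ≤ M i j) {s t : ℕ}
    (hst : s ≤ t) (i j : I) : ((M + 1) ^ s) i j ≤ ((M + 1) ^ t) i j := by
  obtain ⟨u, rfl⟩ := Nat.exists_eq_add_of_le hst
  rw [pow_add, Matrix.mul_apply]
  have h1 : ((M + 1) ^ s) i j * ((M + 1) ^ u) j j ≤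
      ∑ l, ((M + 1) ^ s) i l * ((M + 1) ^ u) l j :=
    Finset.single_le_sum
      (f := fun l => ((M + 1) ^ s) i l * ((M + 1) ^ u) l j)
      (fun l _ => mul_nonneg (entry_pow_nonneg (add_one_entry_nonneg hM) s i l)
        (entry_pow_nonneg (add_one_entry_nonneg hM) u l j)) (Finset.mem_univ j)
  calc ((M + 1) ^ s) i j = ((M + 1) ^ s) i j * 1 := (mul_one _).symm
    _ ≤ ((M + 1) ^ s) i j * ((M + 1) ^ u) j j :=
        mul_le_mul_of_nonneg_left (one_le_pow_add_one_diag hM u j)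
          (entry_pow_nonneg (add_one_entry_nonneg hM) s i j)
    _ ≤ _ := h1

lemma exists_pow_add_one_pos {M : Matrix I I ℝ} (hM : ∀ i j, 0 ≤ M i j)
    (hirr : MatIrred M) : ∃ K : ℕ, ∀ i j, 0 < ((M + 1) ^ K) i j := by
  classical
  choose k hk1 hk2 using hirr
  refine ⟨Finset.univ.sup (fun p : I × I => k p.1 p.2), fun i j => ?_⟩
  have hle : k i j ≤ Finset.univ.sup (fun p : I × I => k p.1 p.2) :=
    Finset.le_sup (f := fun p : I × I => k p.1 p.2) (Finset.mem_univ (i, j))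
  calc (0 : ℝ) < (M ^ (k i j)) i j := hk2 i j
    _ ≤ ((M + 1) ^ (k i j)) i j :=
        entry_pow_mono hM (fun i j => by
          have h1 : (0:ℝ) ≤ (1 : Matrix I I ℝ) i j := by
            by_cases h : i = j <;> simp [Matrix.one_apply, h]
          rw [Matrix.add_apply]
          linarith) (k i j) i j
    _ ≤ _ := pow_add_one_entry_mono_exp hM hle i j

lemma le_specRad_of_subinvariant [Nonempty I]
    {M : Matrix I I ℝ} (hM : ∀ i j, 0 ≤ M i j) {c : ℝ} (hc : 0 < c) {w : I → ℝ}
    (hw : ∀ i, 0 < w i) (hcw : ∀ i, c * w i ≤ M.mulVec w i) {c' : ℝ} (hc'0 : 0 < c')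
    (hc' : c' < c) : ENNReal.ofReal c' ≤ specRad M := by
  classical
  have hpow : ∀ k : ℕ, ∀ i, c ^ k * w i ≤ (M ^ k).mulVec w i := by
    intro k
    induction k with
    | zero => intro i; simp [Matrix.one_mulVec]
    | succ k ih =>
        intro i
        have h1 : (M ^ (k + 1)).mulVec w = M.mulVec ((M ^ k).mulVec w) := by
          rw [Matrix.mulVec_mulVec, ← pow_succ']
        rw [h1]
        have h2 : M.mulVec (fun j => c ^ k * w j) i ≤ M.mulVec ((M ^ k).mulVec w) i :=
          mulVec_entry_mono hM (fun j => ih j) i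
        have h3 : M.mulVec (fun j => c ^ k * w j) i = c ^ k * M.mulVec w i := by
          simp only [Matrix.mulVec, dotProduct, Finset.mul_sum]
          exact Finset.sum_congr rfl fun j _ => by ring
        calc c ^ (k + 1) * w i = c ^ k * (c * w i) := by ring
          _ ≤ c ^ k * M.mulVec w i :=
              mul_le_mul_of_nonneg_left (hcw i) (pow_nonneg hc.le k)
          _ = M.mulVec (fun j => c ^ k * w j) i := h3.symm
          _ ≤ _ := h2
  obtain ⟨i₀⟩ := (inferInstance : Nonempty I)
  have hne : (Finset.univ : Finset I).Nonempty := Finset.univ_nonempty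
  set W := Finset.univ.sup' hne w with hW
  have hWpos : 0 < W := lt_of_lt_of_le (hw i₀) (Finset.le_sup' w (Finset.mem_univ i₀))
  set b := w i₀ / W with hb
  have hbpos : 0 < b := div_pos (hw i₀) hWpos
  have hrow : ∀ k : ℕ, c ^ k * b ≤ ∑ j, (M ^ k) i₀ j := by
    intro k
    have h1 : c ^ k * w i₀ ≤ ∑ j, (M ^ k) i₀ j * w j := by
      simpa [Matrix.mulVec, dotProduct] using hpow k i₀
    have h2 : ∑ j, (M ^ k) i₀ j * w j ≤ (∑ j, (M ^ k) i₀ j) * W := by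
      rw [Finset.sum_mul]
      exact Finset.sum_le_sum fun j _ =>
        mul_le_mul_of_nonneg_left (Finset.le_sup' w (Finset.mem_univ j))
          (entry_pow_nonneg hM k i₀ j)
    have h3 : c ^ k * w i₀ / W ≤ ∑ j, (M ^ k) i₀ j := by
      rw [div_le_iff₀ hWpos]
      exact le_trans h1 h2
    calc c ^ k * b = c ^ k * w i₀ / W := by rw [hb, mul_div_assoc']
      _ ≤ _ := h3
  set Mc := M.map (algebraMap ℝ ℂ) with hMc
  have hmap : ∀ k : ℕ, Mc ^ k = (M ^ k).map (algebraMap ℝ ℂ) := by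
    intro k
    have h := map_pow ((algebraMap ℝ ℂ).mapMatrix) M k
    simpa [RingHom.mapMatrix_apply, hMc] using h.symm
  have hentry : ∀ k : ℕ, ∀ j, ‖(Mc ^ k) i₀ j‖ = (M ^ k) i₀ j := by
    intro k j
    rw [hmap, Matrix.map_apply]
    rw [show (algebraMap ℝ ℂ) ((M ^ k) i₀ j) = ((M ^ k) i₀ j : ℂ) from rfl]
    rw [Complex.norm_real]
    exact Real.norm_of_nonneg (entry_pow_nonneg hM k i₀ j)
  have htend := spectrum.pow_nnnorm_pow_one_div_tendsto_nhds_spectralRadius Mc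
  have hspec : specRad M = spectralRadius ℂ Mc := rfl
  rw [hspec]
  refine ge_of_tendsto htend ?_
  have hratio : Filter.Tendsto (fun k : ℕ => (c' / c) ^ k) Filter.atTop (nhds 0) :=
    tendsto_pow_atTop_nhds_zero_of_lt_one (by positivity) ((div_lt_one hc).mpr hc')
  filter_upwards [hratio.eventually_lt_const hbpos, Filter.eventually_ge_atTop 1]
    with k hk hk1
  have hk0 : (k : ℝ) ≠ 0 := Nat.cast_ne_zero.mpr (by omega)
  have hck : c' ^ k ≤ b * c ^ k := by
    have h1 : c' ^ k = (c' / c) ^ k * c ^ k := by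
      rw [div_pow, div_mul_cancel₀]
      exact pow_ne_zero k hc.ne'
    rw [h1]
    exact mul_le_mul_of_nonneg_right hk.le (pow_nonneg hc.le k)
  have hrow' : c' ^ k ≤ ∑ j, (M ^ k) i₀ j :=
    le_trans hck (by rw [mul_comm]; exact hrow k)
  have hnn : (c'.toNNReal) ^ k ≤ ‖Mc ^ k‖₊ := by
    rw [Matrix.linfty_opNNNorm_def]
    refine le_trans ?_ (Finset.le_sup (f := fun i => ∑ j, ‖(Mc ^ k) i j‖₊)
      (Finset.mem_univ i₀))
    rw [← NNReal.coe_le_coe, NNReal.coe_pow, Real.coe_toNNReal _ hc'0.le, NNReal.coe_sum]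
    calc c' ^ k ≤ ∑ j, (M ^ k) i₀ j := hrow'
      _ = ∑ j, (‖(Mc ^ k) i₀ j‖₊ : ℝ) := by
          refine Finset.sum_congr rfl fun j _ => ?_
          rw [coe_nnnorm, hentry k j]
  have h1 : (ENNReal.ofReal c') ^ k ≤ (‖Mc ^ k‖₊ : ENNReal) := by
    rw [ENNReal.ofReal]
    exact_mod_cast hnn
  have h2 : ((ENNReal.ofReal c') ^ k : ENNReal) ^ (1 / (k : ℝ)) = ENNReal.ofReal c' := by
    rw [← ENNReal.rpow_natCast, ← ENNReal.rpow_mul, mul_one_div_cancel hk0, ENNReal.rpow_one]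
  calc ENNReal.ofReal c' = ((ENNReal.ofReal c') ^ k : ENNReal) ^ (1 / (k : ℝ)) := h2.symm
    _ ≤ (‖Mc ^ k‖₊ : ENNReal) ^ (1 / (k : ℝ)) :=
        ENNReal.rpow_le_rpow h1 (by positivity)

lemma specRad_gt_of_subinvariant [Nonempty I]
    (M : Matrix I I ℝ) (hM : ∀ i j, 0 ≤ M i j) (hirr : MatIrred M)
    {r : ℝ} (hr : 0 ≤ r) {y : I → ℝ} (hy : ∀ i, 0 ≤ y i)
    (hy0 : ∃ i, 0 < y i) (hyz : ∃ i, y i = 0)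
    (hsub : ∀ i, r * y i ≤ M.mulVec y i) :
    ENNReal.ofReal r < specRad M := by
  classical
  by_cases hcase : ∃ i, y i = 0 ∧ 0 < M.mulVec y i
  · obtain ⟨i1, hyi1, hMyi1⟩ := hcase
    obtain ⟨K, hK⟩ := exists_pow_add_one_pos hM hirr
    set P := (M + 1) ^ K with hP
    set u : I → ℝ := fun i => M.mulVec y i - r * y i with hu
    have hu0 : ∀ i, 0 ≤ u i := fun i => sub_nonneg.mpr (hsub i)
    have hu1 : 0 < u i1 := by simp [hu, hyi1, hMyi1]
    set w := P.mulVec y with hw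
    have hwpos : ∀ i, 0 < w i := mulVec_entry_pos hK hy hy0
    have hvpos : ∀ i, 0 < P.mulVec u i := mulVec_entry_pos hK hu0 ⟨i1, hu1⟩
    have hcomm : Commute M P := ((Commute.refl M).add_right (Commute.one_right M)).pow_right K
    have hid : ∀ i, P.mulVec u i = M.mulVec w i - r * w i := by
      intro i
      have h1 : P.mulVec u i = P.mulVec (M.mulVec y) i - r * (P.mulVec y) i := by
        simp only [Matrix.mulVec, dotProduct, hu, Finset.mul_sum,
          ← Finset.sum_sub_distrib]
        exact Finset.sum_congr rfl fun j _ => by rw [mul_sub, Finset.mul_sum, mul_left_comm]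
      rw [h1, Matrix.mulVec_mulVec, ← hcomm.eq, ← Matrix.mulVec_mulVec]
    have hlt : ∀ i, r * w i < M.mulVec w i := by
      intro i
      have h := hvpos i
      rw [hid i] at h
      linarith
    have hne : (Finset.univ : Finset I).Nonempty := Finset.univ_nonempty
    set c := Finset.univ.inf' hne (fun i => M.mulVec w i / w i) with hc
    have hrc : r < c :=
      (Finset.lt_inf'_iff hne).mpr fun i _ => (lt_div_iff₀ (hwpos i)).mpr (hlt i)
    have hcw : ∀ i, c * w i ≤ M.mulVec w i := fun i =>
      (le_div_iff₀ (hwpos i)).mp (Finset.inf'_le _ (Finset.mem_univ i))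
    have hcpos : 0 < c := lt_of_le_of_lt hr hrc
    have hmidpos : 0 < (r + c) / 2 := by linarith
    have hmid2 : (r + c) / 2 < c := by linarith
    have hle := le_specRad_of_subinvariant hM hcpos hwpos hcw hmidpos hmid2
    calc ENNReal.ofReal r < ENNReal.ofReal ((r + c) / 2) := by
          rw [ENNReal.ofReal_lt_ofReal_iff hmidpos]; linarith
      _ ≤ specRad M := hle
  · push_neg at hcase
    obtain ⟨i0, hi0⟩ := hyz
    obtain ⟨j0, hj0⟩ := hy0
    have hclosed : ∀ i, y i = 0 → M.mulVec y i = 0 := fun i hyi =>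
      le_antisymm (hcase i hyi) (mulVec_entry_nonneg hM hy i)
    have hzero : ∀ k : ℕ, ∀ i j, y i = 0 → 0 < y j → (M ^ k) i j = 0 := by
      intro k
      induction k with
      | zero =>
          intro i j hyi hyj
          have hij : i ≠ j := fun h => absurd hyi (by rw [h]; exact ne_of_gt hyj)
          rw [pow_zero]
          exact Matrix.one_apply_ne hij
      | succ k ih =>
          intro i j hyi hyj
          rw [pow_succ', Matrix.mul_apply]
          refine Finset.sum_eq_zero fun l _ => ?_
          by_cases hl : y l = 0
          · rw [ih l j hl hyj, mul_zero]
          · have hlpos : 0 < y l := lt_of_le_of_ne (hy l) (Ne.symm hl)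
            have hMil : M i l = 0 := by
              have h0 : ∑ t, M i t * y t = 0 := by
                simpa [Matrix.mulVec, dotProduct] using hclosed i hyi
              have hall := (Finset.sum_eq_zero_iff_of_nonneg
                (fun t _ => mul_nonneg (hM i t) (hy t))).mp h0 l (Finset.mem_univ l)
              rcases mul_eq_zero.mp hall with h | h
              · exact h
              · exact absurd h (ne_of_gt hlpos)
            rw [hMil, zero_mul]
    obtain ⟨k, _, hk2⟩ := hirr i0 j0
    exact absurd (hzero k i0 j0 hi0 hj0) (ne_of_gt hk2)

end Aux

/-- the basic reproduction number of the layered networked SIWS model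
strictly exceeds that of the networked SIS model (Proposition 3). -/
theorem siws_reproduction_number_larger {n m : ℕ} (hn : 0 < n) (hm : 0 < m)
    (δ : Fin n → ℝ) (δw : Fin m → ℝ)
    (B : Matrix (Fin n) (Fin n) ℝ) (Bw : Matrix (Fin n) (Fin m) ℝ)
    (Cw : Matrix (Fin m) (Fin n) ℝ) (Aw : Matrix (Fin m) (Fin m) ℝ)
    (hBf : ∀ i j, 0 ≤ BfM B Bw Cw Aw i j)
    (hDf : ∀ i, 0 < DfM δ δw Aw i i)
    (hirr : MatIrred (BfM B Bw Cw Aw)) :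
    specRad ((Matrix.diagonal δ)⁻¹ * B) < specRad ((DfM δ δw Aw)⁻¹ * BfM B Bw Cw Aw) := by
  classical
  haveI : Nonempty (Fin n) := Fin.pos_iff_nonempty.mp hn
  haveI : Nonempty (Fin m) := Fin.pos_iff_nonempty.mp hm
  set d : Fin n ⊕ Fin m → ℝ := Sum.elim δ (fun j => δw j - Aw j j) with hd
  have hDfd : DfM δ δw Aw = Matrix.diagonal d := by
    rw [DfM, hd, Matrix.fromBlocks_diagonal]
  have hdpos : ∀ i, 0 < d i := by
    intro i
    have h := hDf i
    rwa [hDfd, Matrix.diagonal_apply_eq] at h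
  have hDinv : (DfM δ δw Aw)⁻¹ = Matrix.diagonal (fun i => (d i)⁻¹) := by
    rw [hDfd]
    refine Matrix.inv_eq_right_inv ?_
    rw [Matrix.diagonal_mul_diagonal]
    have h : (fun i => d i * (d i)⁻¹) = fun _ => (1 : ℝ) :=
      funext fun i => mul_inv_cancel₀ (hdpos i).ne'
    rw [h]
    exact Matrix.diagonal_one
  set Bf := BfM B Bw Cw Aw with hBfdef
  set M := (DfM δ δw Aw)⁻¹ * Bf with hMdef
  have hMentry : ∀ i j, M i j = (d i)⁻¹ * Bf i j := by
    intro i j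
    rw [hMdef, hDinv, Matrix.diagonal_mul]
  have hMnn : ∀ i j, 0 ≤ M i j := fun i j => by
    rw [hMentry]
    exact mul_nonneg (inv_nonneg.mpr (hdpos i).le) (hBf i j)
  have hMirr : MatIrred M := by
    have hne : (Finset.univ : Finset (Fin n ⊕ Fin m)).Nonempty := Finset.univ_nonempty
    set c := Finset.univ.inf' hne (fun i => (d i)⁻¹) with hcdef
    have hc : 0 < c := (Finset.lt_inf'_iff hne).mpr fun i _ => inv_pos.mpr (hdpos i)
    refine matIrred_of_le hBf hc (fun i j => ?_) hirr
    rw [hMentry]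
    exact mul_le_mul_of_nonneg_right (Finset.inf'_le _ (Finset.mem_univ i)) (hBf i j)
  set A := (Matrix.diagonal δ)⁻¹ * B with hAdef
  have hδpos : ∀ a, 0 < δ a := fun a => by simpa [hd] using hdpos (Sum.inl a)
  have hAinv : (Matrix.diagonal δ)⁻¹ = Matrix.diagonal (fun a => (δ a)⁻¹) := by
    refine Matrix.inv_eq_right_inv ?_
    rw [Matrix.diagonal_mul_diagonal]
    have h : (fun a => δ a * (δ a)⁻¹) = fun _ => (1 : ℝ) :=
      funext fun a => mul_inv_cancel₀ (hδpos a).ne'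
    rw [h]
    exact Matrix.diagonal_one
  have hAentry : ∀ a b, A a b = (δ a)⁻¹ * B a b := by
    intro a b
    rw [hAdef, hAinv, Matrix.diagonal_mul]
  have hBfentry : ∀ a b, Bf (Sum.inl a) (Sum.inl b) = B a b := fun a b => rfl
  have hBnn : ∀ a b, 0 ≤ B a b := fun a b => by
    have := hBf (Sum.inl a) (Sum.inl b)
    rwa [hBfentry] at this
  have hAnn : ∀ a b, 0 ≤ A a b := fun a b => by
    rw [hAentry]
    exact mul_nonneg (inv_nonneg.mpr (hδpos a).le) (hBnn a b)
  have hMA : ∀ a b, M (Sum.inl a) (Sum.inl b) = A a b := by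
    intro a b
    rw [hMentry, hBfentry, hAentry]
    have : d (Sum.inl a) = δ a := by simp [hd]
    rw [this]
  -- eigenvalue attaining the spectral radius of A
  set Ac := A.map (algebraMap ℝ ℂ) with hAc
  have hσne : (spectrum ℂ Ac).Nonempty := spectrum.nonempty Ac
  obtain ⟨lam, hlam, hlameq⟩ :=
    spectrum.exists_nnnorm_eq_spectralRadius_of_nonempty (𝕜 := ℂ) hσne
  have hdet : (algebraMap ℂ (Matrix (Fin n) (Fin n) ℂ) lam - Ac).det = 0 := by
    by_contra hdet
    exact (spectrum.mem_iff.mp hlam)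
      ((Matrix.isUnit_iff_isUnit_det _).mpr (isUnit_iff_ne_zero.mpr hdet))
  obtain ⟨z, hz0, hz⟩ := Matrix.exists_mulVec_eq_zero_iff.mpr hdet
  have heig : Ac.mulVec z = lam • z := by
    have h1 := hz
    rw [Matrix.sub_mulVec, sub_eq_zero] at h1
    have h2 : (algebraMap ℂ (Matrix (Fin n) (Fin n) ℂ) lam).mulVec z = lam • z := by
      rw [Algebra.algebraMap_eq_smul_one, Matrix.smul_mulVec, Matrix.one_mulVec]
    rw [← h1, h2]
  set r := ‖lam‖ with hr
  set y : Fin n ⊕ Fin m → ℝ := Sum.elim (fun a => ‖z a‖) (fun _ => (0 : ℝ)) with hy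
  have hynn : ∀ i, 0 ≤ y i := by
    rintro (a | b) <;> simp [hy]
  have hy0 : ∃ i, 0 < y i := by
    obtain ⟨a, ha⟩ := Function.ne_iff.mp hz0
    exact ⟨Sum.inl a, by simpa [hy] using norm_pos_iff.mpr ha⟩
  have hyz : ∃ i, y i = 0 := ⟨Sum.inr ⟨0, hm⟩, rfl⟩
  have hsub : ∀ i, r * y i ≤ M.mulVec y i := by
    rintro (a | b)
    · have hMv : M.mulVec y (Sum.inl a) = ∑ b, A a b * ‖z b‖ := by
        simp only [Matrix.mulVec, dotProduct]
        rw [Fintype.sum_sum_type]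
        simp [hy, hMA]
      rw [hMv]
      have h1 : r * y (Sum.inl a) = ‖(Ac.mulVec z) a‖ := by
        rw [heig]
        simp [hy, hr, norm_smul]
      rw [h1]
      calc ‖(Ac.mulVec z) a‖ = ‖∑ b, Ac a b * z b‖ := by
            simp [Matrix.mulVec, dotProduct]
        _ ≤ ∑ b, ‖Ac a b * z b‖ := norm_sum_le _ _
        _ = ∑ b, A a b * ‖z b‖ := by
            refine Finset.sum_congr rfl fun b _ => ?_
            rw [norm_mul, hAc, Matrix.map_apply,
              show (algebraMap ℝ ℂ) (A a b) = ((A a b : ℝ) : ℂ) from rfl,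
              Complex.norm_real, Real.norm_of_nonneg (hAnn a b)]
    · have h1 : 0 ≤ M.mulVec y (Sum.inr b) := mulVec_entry_nonneg hMnn hynn _
      have h2 : y (Sum.inr b) = 0 := rfl
      rw [h2, mul_zero]
      exact h1
  have hmain := specRad_gt_of_subinvariant M hMnn hMirr (norm_nonneg lam) hynn hy0 hyz hsub
  have hspecA : specRad A = ENNReal.ofReal r := by
    rw [hr, show ENNReal.ofReal ‖lam‖ = (‖lam‖₊ : ENNReal) from
      ENNReal.ofReal_eq_coe_nnreal (norm_nonneg _), hlameq]
    rfl
  rw [hspecA]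
  exact hmain
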